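/- Let (X,d) be a semi-metric space and x₀ ∈ X. If k(x,y) = d(x,x₀) + d(y,x₀) − d(x,y) is a positive definite kernel, then (X,d) is of 1-negative type; conversely, if (X,d) is of 1-negative type, then k is a positive definite kernel. -/

import Mathlib

noncomputable section

/-- A semi-metric `d` on `X` is of `q`-negative type. -/
def NegType {X : Type*} (d : X → X → ℝ) (q : ℝ) : Prop :=
  ∀ (n : ℕ) (x : Fin n → X) (a : Fin n → ℝ), (∑ i, a i) = 0 →
    ∑ i, ∑ j, a i * a j * d (x i) (x j) ^ q ≤ 0

/-- `k : X × X → ℝ` is a positive definite kernel. -/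
def PosDefKernel {X : Type*} (k : X → X → ℝ) : Prop :=
  ∀ (n : ℕ) (x : Fin n → X) (c : Fin n → ℝ),
    0 ≤ ∑ i, ∑ j, c i * c j * k (x i) (x j)

lemma expand_aux {n : ℕ} (a : Fin n → ℝ) (A : Fin n → ℝ) (D : Fin n → Fin n → ℝ)
    (ha : (∑ i, a i) = 0) :
    ∑ i, ∑ j, a i * a j * (A i + A j - D i j)
      = - ∑ i, ∑ j, a i * a j * D i j := by
  have h1 : ∑ i, ∑ j, a i * a j * (A i + A j - D i j)
      = ∑ i, ∑ j, (a i * A i * a j + a i * (a j * A j) - a i * a j * D i j) := by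
    apply Finset.sum_congr rfl; intro i _
    apply Finset.sum_congr rfl; intro j _
    ring
  rw [h1]
  simp only [Finset.sum_sub_distrib, Finset.sum_add_distrib, ← Finset.mul_sum,
    ← Finset.sum_mul, ha]
  ring

/-- For a semi-metric space `(X,d)` and `x₀ ∈ X`, the function
`k(x,y) = d(x,x₀) + d(y,x₀) - d(x,y)` is a positive definite kernel iff `(X,d)` is of
`1`-negative type. -/
theorem stmt17 {X : Type*} (d : X → X → ℝ)
    (h0 : ∀ x, d x x = 0) (hsymm : ∀ x y, d x y = d y x) (hnonneg : ∀ x y, 0 ≤ d x y)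
    (x₀ : X) :
    PosDefKernel (fun x y => d x x₀ + d y x₀ - d x y) ↔ NegType d 1 := by
  constructor
  · intro hk n x a ha
    have h := hk n x a
    simp only [Real.rpow_one]
    rw [expand_aux a (fun i => d (x i) x₀) (fun i j => d (x i) (x j)) ha] at h
    linarith
  · intro hd n x c
    set s : ℝ := ∑ i, c i with hs
    set a : Fin (n + 1) → ℝ := Fin.snoc c (-s) with hadef
    set y : Fin (n + 1) → X := Fin.snoc x x₀ with hydef
    have hsum : (∑ i, a i) = 0 := by
      rw [Fin.sum_univ_castSucc]
      simp [hadef, hs]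
    have h := hd (n + 1) y a hsum
    simp only [Real.rpow_one] at h
    have hexp : ∑ i, ∑ j, a i * a j * d (y i) (y j)
        = ∑ i, ∑ j, c i * c j * d (x i) (x j)
          - s * ∑ j, c j * d x₀ (x j) - (∑ i, c i * d (x i) x₀) * s
          + s * s * d x₀ x₀ := by
      rw [Fin.sum_univ_castSucc]
      have hinner : ∀ i : Fin (n + 1),
          ∑ j, a i * a j * d (y i) (y j)
            = (∑ j : Fin n, a i * c j * d (y i) (x j)) + a i * (-s) * d (y i) x₀ := by
        intro i
        rw [Fin.sum_univ_castSucc]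
        simp [hadef, hydef]
      simp only [hinner]
      simp only [hadef, hydef, Fin.snoc_castSucc, Fin.snoc_last]
      rw [Finset.sum_add_distrib]
      ring_nf
      have e1 : ∀ i : Fin n, -s * c i * d x₀ (x i) = -(s * (c i * d x₀ (x i))) := by
        intro i; ring
      have e2 : ∀ i : Fin n, -(c i * s) * d (x i) x₀ = -(s * (c i * d (x i) x₀)) := by
        intro i; ring
      simp only [e1, e2, Finset.sum_neg_distrib, ← Finset.mul_sum]
      simp only [mul_assoc, ← Finset.mul_sum]
      have e3 : ∑ i, c i * (s * d (x i) x₀) = s * ∑ i, c i * d (x i) x₀ := by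
        rw [Finset.mul_sum]; exact Finset.sum_congr rfl (fun i _ => by ring)
      linarith [e3]
    rw [hexp, h0] at h
    simp only [hsymm x₀] at h
    have hgoal : ∑ i, ∑ j, c i * c j * (d (x i) x₀ + d (x j) x₀ - d (x i) (x j))
        = (∑ i, c i * d (x i) x₀) * s + s * (∑ j, c j * d (x j) x₀)
          - ∑ i, ∑ j, c i * c j * d (x i) (x j) := by
      have h1 : ∀ i : Fin n, ∑ j, c i * c j * (d (x i) x₀ + d (x j) x₀ - d (x i) (x j))
          = c i * d (x i) x₀ * s + c i * (∑ j, c j * d (x j) x₀)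
            - ∑ j, c i * c j * d (x i) (x j) := by
        intro i
        rw [hs, Finset.mul_sum, Finset.mul_sum, ← Finset.sum_add_distrib,
          ← Finset.sum_sub_distrib]
        apply Finset.sum_congr rfl; intro j _; ring
      simp only [h1]
      rw [Finset.sum_sub_distrib, Finset.sum_add_distrib, ← Finset.sum_mul,
        ← Finset.sum_mul, ← hs]
    simp only []
    rw [hgoal]
    linarith
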